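/- The integral of exp(-csc²(x)) over x from 0 to π/2 equals (π/2)·erfc(1). -/

import Mathlib

open Real MeasureTheory

noncomputable def erfc (x : ℝ) : ℝ := (2 / Real.sqrt π) * ∫ t in Set.Ioi x, Real.exp (-t ^ 2)

lemma exp_int (c : ℝ) (hc : 0 < c) :
    ∫ s in Set.Ioi (1:ℝ), Real.exp (-(c * s)) = Real.exp (-c) / c := by
  have himg : (fun s : ℝ => c * s) '' Set.Ioi 1 = Set.Ioi c := by
    ext x
    constructor
    · rintro ⟨t, ht, rfl⟩
      simpa using (mul_lt_mul_of_pos_left ht hc)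
    · intro hx
      exact ⟨x / c, by rw [Set.mem_Ioi, lt_div_iff₀ hc, one_mul]; exact hx,
        by field_simp⟩
  have h := integral_image_eq_integral_abs_deriv_smul (measurableSet_Ioi (a := (1:ℝ)))
    (f' := fun _ => c)
    (fun x _ => by simpa using ((hasDerivAt_id x).const_mul c).hasDerivWithinAt)
    (fun a _ b _ h => mul_left_cancel₀ hc.ne' h) 
    (fun x => Real.exp (-x))
  rw [himg, integral_exp_neg_Ioi] at h
  rw [h]
  simp only [smul_eq_mul, abs_of_pos hc]
  rw [MeasureTheory.integral_const_mul]
  field_simp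

lemma gauss_int (s : ℝ) (hs : 0 < s) :
    ∫ t in Set.Ioi (0:ℝ), Real.exp (-(s * (1 + t ^ 2))) = Real.exp (-s) * (Real.sqrt (π / s) / 2) := by
  have h : ∀ t : ℝ, Real.exp (-(s * (1 + t ^ 2))) = Real.exp (-s) * Real.exp (-s * t ^ 2) := by
    intro t; rw [← Real.exp_add]; ring_nf
  simp_rw [h]
  rw [MeasureTheory.integral_const_mul, integral_gaussian_Ioi]

lemma sqrt_sub_int :
    ∫ s in Set.Ioi (1:ℝ), Real.exp (-s) * (Real.sqrt (π / s) / 2)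
      = Real.sqrt π * ∫ u in Set.Ioi (1:ℝ), Real.exp (-u ^ 2) := by
  have himg : (fun u : ℝ => u ^ 2) '' Set.Ioi 1 = Set.Ioi 1 := by
    ext x
    constructor
    · rintro ⟨t, ht, rfl⟩
      simp only [Set.mem_Ioi] at *
      nlinarith
    · intro hx
      simp only [Set.mem_Ioi] at hx
      refine ⟨Real.sqrt x, ?_, Real.sq_sqrt (by linarith)⟩
      simp only [Set.mem_Ioi]
      nlinarith [Real.sq_sqrt (show (0:ℝ) ≤ x by linarith), Real.sqrt_nonneg x]
  have hinj : Set.InjOn (fun u : ℝ => u ^ 2) (Set.Ioi 1) := by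
    intro a ha b hb h
    simp only [Set.mem_Ioi] at ha hb
    simp only at h
    nlinarith
  have h := integral_image_eq_integral_abs_deriv_smul (measurableSet_Ioi (a := (1:ℝ)))
    (f' := fun u => 2 * u)
    (fun x _ => by simpa using (hasDerivAt_pow 2 x).hasDerivWithinAt)
    hinj (fun s => Real.exp (-s) * (Real.sqrt (π / s) / 2))
  rw [himg] at h
  rw [h, ← MeasureTheory.integral_const_mul]
  apply setIntegral_congr_fun (measurableSet_Ioi)
  intro u hu
  simp only [Set.mem_Ioi] at hu
  have hu0 : (0:ℝ) < u := by linarith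
  have : Real.sqrt (π / u ^ 2) = Real.sqrt π / u := by
    rw [Real.sqrt_div pi_pos.le, Real.sqrt_sq hu0.le]
  simp only [smul_eq_mul]
  rw [this, abs_of_pos (by linarith : (0:ℝ) < 2 * u)]
  field_simp

lemma swap_int :
    ∫ t in Set.Ioi (0:ℝ), ∫ s in Set.Ioi (1:ℝ), Real.exp (-(s * (1 + t ^ 2)))
      = ∫ s in Set.Ioi (1:ℝ), ∫ t in Set.Ioi (0:ℝ), Real.exp (-(s * (1 + t ^ 2))) := by
  apply MeasureTheory.integral_integral_swap
  have hg : Integrable (fun p : ℝ × ℝ => Real.exp (-(p.1 ^ 2)) * Real.exp (-p.2))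
      ((volume.restrict (Set.Ioi 0)).prod (volume.restrict (Set.Ioi 1))) := by
    have h1 : Integrable (fun t : ℝ => Real.exp (-(t ^ 2))) (volume.restrict (Set.Ioi 0)) := by
      have := (integrable_exp_neg_mul_sq (one_pos)).integrableOn (s := Set.Ioi (0:ℝ))
      exact (by simpa using this : IntegrableOn _ _ _)
    have h2 : Integrable (fun s : ℝ => Real.exp (-s)) (volume.restrict (Set.Ioi 1)) := by
      have := exp_neg_integrableOn_Ioi 1 (one_pos)
      exact (by simpa using this : IntegrableOn _ _ _)
    exact h1.mul_prod h2
  apply hg.mono'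
  · apply Continuous.aestronglyMeasurable
    fun_prop
  · rw [Measure.prod_restrict]
    rw [ae_restrict_iff' ((measurableSet_Ioi).prod (measurableSet_Ioi))]
    filter_upwards with p hp
    obtain ⟨ht, hs⟩ := hp
    simp only [Set.mem_Ioi] at ht hs
    rw [Function.uncurry]
    rw [Real.norm_eq_abs, abs_of_pos (Real.exp_pos _), ← Real.exp_add]
    apply Real.exp_le_exp.2
    nlinarith

lemma key_int :
    ∫ t in Set.Ioi (0:ℝ), (1 / (1 + t ^ 2)) * Real.exp (-(1 + t ^ 2))
      = Real.sqrt π * ∫ u in Set.Ioi (1:ℝ), Real.exp (-u ^ 2) := by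
  have h1 : ∀ t : ℝ, (1 / (1 + t ^ 2)) * Real.exp (-(1 + t ^ 2))
      = ∫ s in Set.Ioi (1:ℝ), Real.exp (-((1 + t ^ 2) * s)) := by
    intro t
    rw [exp_int (1 + t ^ 2) (by positivity)]
    ring
  simp_rw [h1, mul_comm]
  rw [swap_int]
  rw [← sqrt_sub_int]
  apply setIntegral_congr_fun (measurableSet_Ioi)
  intro s hs
  simp only [Set.mem_Ioi] at hs
  exact gauss_int s (by linarith)

theorem stmt_5 :
    ∫ x in (0:ℝ)..(π / 2), Real.exp (-(1 / Real.sin x) ^ 2)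
      = (π / 2) * erfc 1 := by
  have hpi : (0:ℝ) < π := pi_pos
  have step0 : ∫ x in (0:ℝ)..(π / 2), Real.exp (-(1 / Real.sin x) ^ 2)
      = ∫ x in (0:ℝ)..(π / 2), Real.exp (-(1 / Real.cos x) ^ 2) := by
    have := intervalIntegral.integral_comp_sub_left
      (a := (0:ℝ)) (b := π / 2) (fun x => Real.exp (-(1 / Real.sin x) ^ 2)) (π / 2)
    simp only [sub_self, sub_zero] at this
    rw [← this]
    congr 1
    ext x
    rw [Real.sin_pi_div_two_sub]
  rw [step0]
  have step1 : ∫ x in (0:ℝ)..(π / 2), Real.exp (-(1 / Real.cos x) ^ 2)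
      = ∫ x in Set.Ioo (0:ℝ) (π / 2), Real.exp (-(1 / Real.cos x) ^ 2) := by
    rw [intervalIntegral.integral_of_le (by linarith), MeasureTheory.integral_Ioc_eq_integral_Ioo]
  rw [step1]
  have himg : Real.arctan '' Set.Ioi 0 = Set.Ioo 0 (π / 2) := by
    ext x
    constructor
    · rintro ⟨t, ht, rfl⟩
      simp only [Set.mem_Ioi] at ht
      exact ⟨by simpa [Real.arctan_zero] using Real.arctan_strictMono ht,
        Real.arctan_lt_pi_div_two t⟩
    · intro hx
      obtain ⟨h1, h2⟩ := hx
      exact ⟨Real.tan x, Real.tan_pos_of_pos_of_lt_pi_div_two h1 h2,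
        Real.arctan_tan (by linarith) h2⟩
  have h := integral_image_eq_integral_abs_deriv_smul (measurableSet_Ioi (a := (0:ℝ)))
    (f' := fun t => 1 / (1 + t ^ 2))
    (fun x _ => (Real.hasDerivAt_arctan x).hasDerivWithinAt)
    (Real.arctan_injective.injOn)
    (fun x => Real.exp (-(1 / Real.cos x) ^ 2))
  rw [himg] at h
  rw [h]
  have step2 : ∫ t in Set.Ioi (0:ℝ), |1 / (1 + t ^ 2)| • Real.exp (-(1 / Real.cos (Real.arctan t)) ^ 2)
      = ∫ t in Set.Ioi (0:ℝ), (1 / (1 + t ^ 2)) * Real.exp (-(1 + t ^ 2)) := by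
    apply setIntegral_congr_fun (measurableSet_Ioi)
    intro t _
    have h1 : (0:ℝ) < 1 + t ^ 2 := by positivity
    simp only [smul_eq_mul]
    rw [abs_of_pos (by positivity : (0:ℝ) < 1 / (1 + t ^ 2))]
    congr 2
    rw [Real.cos_arctan]
    rw [one_div, one_div, inv_inv]
    rw [Real.sq_sqrt h1.le]
  rw [step2, key_int]
  unfold erfc
  rw [show (π / 2) * ((2 / Real.sqrt π) * ∫ t in Set.Ioi (1:ℝ), Real.exp (-t ^ 2))
      = (π / Real.sqrt π) * ∫ t in Set.Ioi (1:ℝ), Real.exp (-t ^ 2) by ring]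
  rw [Real.div_sqrt]
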